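/- In the coproduct monoid ⟨X⟩ * [Y], if vw = v'w' with |v| = |v'|, |w| = |w'|, and w is non-pure, then the commuting suffixes agree: s(w) = s(w'). -/

import Mathlib

/-- Words over `X ⊔ Y`. -/
abbrev FM (X Y : Type) := FreeMonoid (X ⊕ Y)

/-- Swapping two adjacent `Y`-letters. -/
def yRel (X Y : Type) : FM X Y → FM X Y → Prop := fun a b =>
  ∃ (u v : FM X Y) (y₁ y₂ : Y),
    a = u * FreeMonoid.of (Sum.inr y₁) * FreeMonoid.of (Sum.inr y₂) * v ∧
    b = u * FreeMonoid.of (Sum.inr y₂) * FreeMonoid.of (Sum.inr y₁) * v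

/-- The congruence generated by swaps of adjacent `Y`-letters. -/
def coCon (X Y : Type) : Con (FM X Y) := conGen (yRel X Y)

/-- The coproduct monoid `⟨X⟩ * [Y]`. -/
abbrev CoprodM (X Y : Type) := (coCon X Y).Quotient

/-- Length descends to the quotient. -/
def lenHom (X Y : Type) : CoprodM X Y →* Multiplicative ℕ :=
  Con.lift _ (FreeMonoid.lift fun _ => Multiplicative.ofAdd 1) (by
    refine Con.conGen_le.2 ?_
    rintro a b ⟨u, v, y₁, y₂, rfl, rfl⟩
    simp [Con.ker_rel, map_mul])

/-- Length of an element of the coproduct monoid. -/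
def len {X Y : Type} (w : CoprodM X Y) : ℕ := Multiplicative.toAdd (lenHom X Y w)

/-- A monoid recording the commuting prefix and suffix. -/
inductive PS (Y : Type) where
  | pure : Multiset Y → PS Y
  | mixed : Multiset Y → Multiset Y → PS Y

def PS.mul {Y : Type} : PS Y → PS Y → PS Y
  | .pure c, .pure d => .pure (c + d)
  | .pure c, .mixed p s => .mixed (c + p) s
  | .mixed p s, .pure d => .mixed p (s + d)
  | .mixed p _, .mixed _ s' => .mixed p s'

instance {Y : Type} : Monoid (PS Y) where
  mul := PS.mul
  one := .pure 0
  mul_assoc a b c := by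
    rcases a <;> rcases b <;> rcases c <;>
      simp [(· * ·), PS.mul, add_assoc]
  one_mul a := by rcases a <;> simp [(· * ·), PS.mul]
  mul_one a := by rcases a <;> simp [(· * ·), PS.mul]

/-- The prefix/suffix data descends to the quotient. -/
def psHom (X Y : Type) : CoprodM X Y →* PS Y :=
  Con.lift _ (FreeMonoid.lift fun a =>
      match a with
      | Sum.inl _ => PS.mixed 0 0
      | Sum.inr y => PS.pure {y}) (by
    refine Con.conGen_le.2 ?_
    rintro a b ⟨u, v, y₁, y₂, rfl, rfl⟩
    have key : (PS.pure {y₁} : PS Y) * PS.pure {y₂} = PS.pure {y₂} * PS.pure {y₁} := by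
      show PS.mul _ _ = PS.mul _ _
      simp [PS.mul, add_comm]
    simp only [Con.ker_rel, map_mul, FreeMonoid.lift_eval_of]
    rw [mul_assoc _ (PS.pure {y₁}), key, mul_assoc, ← mul_assoc, ← mul_assoc])

/-- The commuting prefix of an element, as a multiset of `Y`-variables. -/
def pre {X Y : Type} (w : CoprodM X Y) : Multiset Y :=
  match psHom X Y w with
  | .pure c => c
  | .mixed p _ => p

/-- The commuting suffix of an element, as a multiset of `Y`-variables. -/
def suf {X Y : Type} (w : CoprodM X Y) : Multiset Y :=
  match psHom X Y w with
  | .pure c => c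
  | .mixed _ s => s

/-- The canonical embedding of the free abelian monoid `[Y]` (words in `Y`). -/
def yEmb (X Y : Type) : FreeMonoid Y →* CoprodM X Y :=
  (Con.mk' (coCon X Y)).comp (FreeMonoid.map Sum.inr)

/-- An element is pure if it involves only `Y`-variables. -/
def IsPure {X Y : Type} (w : CoprodM X Y) : Prop := w ∈ MonoidHom.mrange (yEmb X Y)

/-- The pure element of the coproduct monoid corresponding to a multiset of
`Y`-variables. -/
noncomputable def pureElt {X Y : Type} (c : Multiset Y) : CoprodM X Y :=
  yEmb X Y (FreeMonoid.ofList c.toList)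

/-- The equivalence relation `∼`: equal lengths and either both pure, or equal
prefix lengths, equal middle parts and equal suffix lengths. -/
noncomputable def Sim {X Y : Type} (u v : CoprodM X Y) : Prop :=
  len u = len v ∧
  ((IsPure u ∧ IsPure v) ∨
    (¬ IsPure u ∧ ¬ IsPure v ∧
      Multiset.card (pre u) = Multiset.card (pre v) ∧
      Multiset.card (suf u) = Multiset.card (suf v) ∧
      ∃ m : CoprodM X Y,
        u = pureElt (pre u) * m * pureElt (suf u) ∧
        v = pureElt (pre v) * m * pureElt (suf v)))



section Aux

variable {X Y : Type}

/-- The letter-map used in `psHom`. -/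
private def psf : X ⊕ Y → PS Y
  | Sum.inl _ => PS.mixed 0 0
  | Sum.inr y => PS.pure {y}

private lemma mul_def (a b : PS Y) : a * b = PS.mul a b := rfl

private lemma psHom_mk (l : FM X Y) :
    psHom X Y ((Con.mk' (coCon X Y)) l) = FreeMonoid.lift psf l := rfl

private lemma lift_len (l : FM X Y) :
    FreeMonoid.lift (fun _ : X ⊕ Y => Multiplicative.ofAdd 1) l
      = Multiplicative.ofAdd (FreeMonoid.length l) := by
  induction l using FreeMonoid.recOn with
  | one => simp
  | of_mul a l ih => simp [map_mul, ih, FreeMonoid.length_mul]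

private lemma len_mk (l : FM X Y) :
    len ((Con.mk' (coCon X Y)) l) = FreeMonoid.length l := by
  show Multiplicative.toAdd
    (FreeMonoid.lift (fun _ : X ⊕ Y => Multiplicative.ofAdd 1) l) = _
  rw [lift_len]
  rfl

private lemma key (l : FM X Y) :
    (∃ c, FreeMonoid.lift psf l = PS.pure c ∧ Multiset.card c = FreeMonoid.length l ∧
      IsPure ((Con.mk' (coCon X Y)) l)) ∨
    (∃ p s, FreeMonoid.lift psf l = PS.mixed p s ∧
      Multiset.card p + Multiset.card s + 1 ≤ FreeMonoid.length l) := by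
  induction l using FreeMonoid.recOn with
  | one =>
    left
    exact ⟨0, rfl, by simp, ⟨1, by simp⟩⟩
  | of_mul a l ih =>
    rw [map_mul, FreeMonoid.lift_eval_of, FreeMonoid.length_mul, FreeMonoid.length_of]
    cases a with
    | inl x =>
      right
      rcases ih with ⟨c, hc, hcard, _⟩ | ⟨p, s, hps, hle⟩
      · exact ⟨0, c, by rw [hc]; simp [psf, mul_def, PS.mul], by simp [hcard]⟩
      · refine ⟨0, s, by rw [hps]; simp [psf, mul_def, PS.mul], ?_⟩
        simp only [Multiset.card_zero, zero_add]
        omega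
    | inr y =>
      rcases ih with ⟨c, hc, hcard, hp⟩ | ⟨p, s, hps, hle⟩
      · left
        refine ⟨{y} + c, by rw [hc]; simp [psf, mul_def, PS.mul], by simp [hcard]; omega, ?_⟩
        obtain ⟨u, hu⟩ := hp
        exact ⟨FreeMonoid.of y * u, by
          rw [map_mul, hu, map_mul]
          rfl⟩
      · right
        refine ⟨{y} + p, s, by rw [hps]; simp [psf, mul_def, PS.mul], ?_⟩
        simp only [Multiset.card_add, Multiset.card_singleton]
        omega

private lemma psHom_yEmb (u : FreeMonoid Y) :
    ∃ c : Multiset Y, psHom X Y (yEmb X Y u) = PS.pure c := by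
  induction u using FreeMonoid.recOn with
  | one => exact ⟨0, by simp; rfl⟩
  | of_mul y u ih =>
    obtain ⟨c, hc⟩ := ih
    refine ⟨{y} + c, ?_⟩
    rw [map_mul, map_mul, hc]
    have : psHom X Y (yEmb X Y (FreeMonoid.of y)) = PS.pure {y} := rfl
    rw [this, mul_def]
    rfl

private lemma isPure_psHom {w : CoprodM X Y} (h : IsPure w) :
    ∃ c, psHom X Y w = PS.pure c ∧ Multiset.card c = len w := by
  obtain ⟨l, rfl⟩ := Con.mk'_surjective w
  rcases key (X := X) (Y := Y) l with ⟨c, hc, hcard, _⟩ | ⟨p, s, hps, _⟩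
  · exact ⟨c, by rw [psHom_mk, hc], by rw [len_mk, hcard]⟩
  · exfalso
    obtain ⟨u, hu⟩ := h
    obtain ⟨c, hc⟩ := psHom_yEmb (X := X) u
    rw [hu, psHom_mk, hps] at hc
    simp at hc

private lemma notPure_psHom {w : CoprodM X Y} (h : ¬ IsPure w) :
    ∃ p s, psHom X Y w = PS.mixed p s ∧
      Multiset.card p + Multiset.card s + 1 ≤ len w := by
  obtain ⟨l, rfl⟩ := Con.mk'_surjective w
  rcases key (X := X) (Y := Y) l with ⟨c, hc, hcard, hp⟩ | ⟨p, s, hps, hle⟩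
  · exact absurd hp h
  · exact ⟨p, s, by rw [psHom_mk, hps], by rw [len_mk]; exact hle⟩

private lemma suf_eq {w : CoprodM X Y} {p s : Multiset Y}
    (h : psHom X Y w = PS.mixed p s) : suf w = s := by
  rw [suf, h]

end Aux

/-- Lemma 3.5(iii): if `vw = v'w'` with `|v| = |v'|`, `|w| = |w'|` and `w`
non-pure, then `s(w) = s(w')`. -/
theorem coprodM_suf_eq_of_mul_eq {X Y : Type} (v w v' w' : CoprodM X Y)
    (h : v * w = v' * w') (hv : len v = len v') (hw : len w = len w')
    (hnp : ¬ IsPure w) :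
    suf w = suf w' := by
  obtain ⟨p, s, hps, hle⟩ := notPure_psHom hnp
  have hsw : suf w = s := suf_eq hps
  -- the suffix of the product `v * w` is `s`
  obtain ⟨p0, hvw⟩ : ∃ p0, psHom X Y (v * w) = PS.mixed p0 s := by
    rw [map_mul, hps]
    cases hpv : psHom X Y v with
    | pure c => exact ⟨c + p, by rw [mul_def]; rfl⟩
    | mixed p1 s1 => exact ⟨p1, by rw [mul_def]; rfl⟩
  -- `w'` is not pure
  have hnp' : ¬ IsPure w' := by
    intro hpure
    obtain ⟨d, hd, hcard⟩ := isPure_psHom hpure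
    rw [h, map_mul, hd] at hvw
    cases hpv' : psHom X Y v' with
    | pure c' =>
      rw [hpv', mul_def] at hvw
      simp [PS.mul] at hvw
    | mixed p1 s1 =>
      rw [hpv', mul_def] at hvw
      injection hvw with h1 h2
      have hcs : Multiset.card s = Multiset.card s1 + Multiset.card d := by
        rw [← h2, Multiset.card_add]
      omega
  obtain ⟨p2, s2, hps2, _⟩ := notPure_psHom hnp'
  have hsw' : suf w' = s2 := suf_eq hps2
  -- the suffix of the product `v' * w'` is `s2`
  obtain ⟨q0, hvw'⟩ : ∃ q0, psHom X Y (v' * w') = PS.mixed q0 s2 := by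
    rw [map_mul, hps2]
    cases hpv' : psHom X Y v' with
    | pure c => exact ⟨c + p2, by rw [mul_def]; rfl⟩
    | mixed p1 s1 => exact ⟨p1, by rw [mul_def]; rfl⟩
  rw [h, hvw'] at hvw
  injection hvw with h1 h2
  rw [hsw, hsw', h2]
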